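/- Let a, c ∈ ℝ and ε > 1. Then the leading coefficient of the uniform expansion has a removable singularity at coalescence: both one-sided limits lim_{α→ε⁺} [ f(ε)/(κ·(α−ε)) − f(α)/√(ψ(ε)−ψ(α)) ] and lim_{α→ε⁻} [ f(ε)/(κ·(α−ε)) + f(α)/√(ψ(ε)−ψ(α)) ] exist and both equal −(f(ε)/κ)·𝒟_0, where 𝒟_0 := (a−1)/ε + (c−a−1)/(ε−1) + ε/(3(ε−1)) − (ε−1)/(3ε). -/

import Mathlib

open Real Filter

/-- ψ(t) := (ε−1)·log(t−1) − ε·log t. -/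
noncomputable def psi (ε t : ℝ) : ℝ := (ε - 1) * Real.log (t - 1) - ε * Real.log t

/-- f(t) := t^{a−1}·(t−1)^{c−a−1}. -/
noncomputable def f (a c t : ℝ) : ℝ := t ^ (a - 1) * (t - 1) ^ (c - a - 1)

lemma log_taylor3 (b : ℝ) (hb : 0 < b) :
    Tendsto (fun h : ℝ => (b * Real.log (1 + h / b) - h + h ^ 2 / (2 * b)) / h ^ 3)
      (nhdsWithin 0 {(0:ℝ)}ᶜ) (nhds (1 / (3 * b ^ 2))) := by
  have key : Tendsto (fun h : ℝ =>
      (b * Real.log (1 + h / b) - h + h ^ 2 / (2 * b)) / h ^ 3 - 1 / (3 * b ^ 2))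
      (nhdsWithin 0 {(0:ℝ)}ᶜ) (nhds 0) := by
    apply squeeze_zero_norm' (a := fun h : ℝ => 2 * |h| / b ^ 3)
    · have hmem : Set.Ioo (-(b/2)) (b/2) ∈ nhdsWithin (0:ℝ) {(0:ℝ)}ᶜ := by
        apply nhdsWithin_le_nhds
        exact Ioo_mem_nhds (by linarith) (by linarith)
      filter_upwards [hmem, self_mem_nhdsWithin] with h hmem hne
      have hne : h ≠ 0 := hne
      have habs : |h| < b / 2 := abs_lt.2 ⟨hmem.1, hmem.2⟩
      have hxb : |(-(h/b))| < 1 := by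
        rw [abs_neg, abs_div, abs_of_pos hb]
        rw [div_lt_one hb]; linarith
      have key := Real.abs_log_sub_add_sum_range_le hxb 3
      have hsum : (∑ i ∈ Finset.range 3, (-(h/b)) ^ (i + 1) / (i + 1)) =
          -(h/b) + (h/b)^2/2 + (-(h/b))^3/3 := by
        simp [Finset.sum_range_succ]; ring
      rw [hsum] at key
      have hlog : Real.log (1 - -(h/b)) = Real.log (1 + h / b) := by ring_nf
      rw [hlog] at key
      have hinner : b * Real.log (1 + h / b) - h + h ^ 2 / (2 * b) - h^3/(3*b^2)
          = b * ((-(h/b) + (h/b)^2/2 + (-(h/b))^3/3) + Real.log (1 + h/b)) := by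
        field_simp; ring
      have h1 : |b * Real.log (1 + h / b) - h + h ^ 2 / (2 * b) - h^3/(3*b^2)|
          ≤ b * (|(-(h/b))| ^ 4 / (1 - |(-(h/b))|)) := by
        rw [hinner, abs_mul, abs_of_pos hb]
        exact mul_le_mul_of_nonneg_left key hb.le
      have habs2 : |(-(h/b))| = |h| / b := by rw [abs_neg, abs_div, abs_of_pos hb]
      rw [habs2] at h1
      have hb4 : (|h|/b)^4 = |h|^4/b^4 := by ring
      have hlb : (1:ℝ)/2 ≤ 1 - |h|/b := by
        have : |h|/b < 1/2 := by rw [div_lt_iff₀ hb]; linarith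
        linarith
      have step : (|h|^4/b^4) / (1 - |h|/b) ≤ (|h|^4/b^4) / (1/2) :=
        div_le_div_of_nonneg_left (by positivity) (by norm_num) hlb
      have h2 : b * ((|h|/b) ^ 4 / (1 - |h|/b)) ≤ 2 * |h|^4 / b^3 := by
        rw [hb4]
        calc b * (|h|^4/b^4/(1-|h|/b)) ≤ b * (|h|^4/b^4/(1/2)) :=
              mul_le_mul_of_nonneg_left step hb.le
          _ = 2*|h|^4/b^3 := by field_simp
      have heq : (b * Real.log (1 + h / b) - h + h ^ 2 / (2 * b)) / h ^ 3 - 1 / (3 * b ^ 2)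
          = (b * Real.log (1 + h / b) - h + h ^ 2 / (2 * b) - h^3/(3*b^2)) / h^3 := by
        rw [sub_div]
        congr 1
        field_simp
      rw [Real.norm_eq_abs, heq, abs_div]
      have hh3 : |h^3| = |h|^3 := by rw [abs_pow]
      rw [hh3]
      have hhpos : (0:ℝ) < |h| := abs_pos.2 hne
      rw [div_le_div_iff₀ (by positivity) (by positivity)]
      calc |b * Real.log (1 + h / b) - h + h ^ 2 / (2 * b) - h ^ 3 / (3 * b ^ 2)| * b ^ 3
          ≤ (2 * |h|^4 / b^3) * b^3 :=
            mul_le_mul_of_nonneg_right (le_trans h1 h2) (by positivity)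
        _ = 2 * |h| * |h|^3 := by field_simp
    · have hc : Continuous (fun h : ℝ => 2 * |h| / b ^ 3) := by continuity
      have ht := hc.tendsto 0
      simp only [abs_zero, mul_zero, zero_div] at ht
      exact ht.mono_left nhdsWithin_le_nhds
  have h3 := key.add (tendsto_const_nhds (x := 1 / (3 * b ^ 2)) (f := nhdsWithin (0:ℝ) {(0:ℝ)}ᶜ))
  rw [zero_add] at h3
  exact h3.congr (fun h => by ring)

lemma f_deriv (a c ε : ℝ) (hε : 1 < ε) :
    HasDerivAt (f a c) (f a c ε * ((a-1)/ε + (c-a-1)/(ε-1))) ε := by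
  have hε0 : (0:ℝ) < ε := by linarith
  have hε1 : (0:ℝ) < ε - 1 := by linarith
  have h1 : HasDerivAt (fun t : ℝ => t ^ (a-1)) ((a-1) * ε ^ (a-1-1)) ε :=
    Real.hasDerivAt_rpow_const (Or.inl (ne_of_gt hε0))
  have h2' : HasDerivAt (fun t : ℝ => t ^ (c-a-1)) ((c-a-1) * (ε-1) ^ (c-a-1-1)) (ε-1) :=
    Real.hasDerivAt_rpow_const (Or.inl (ne_of_gt hε1))
  have hsub : HasDerivAt (fun t : ℝ => t - 1) 1 ε := (hasDerivAt_id ε).sub_const 1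
  have h2 : HasDerivAt (fun t : ℝ => (t-1) ^ (c-a-1)) ((c-a-1) * (ε-1) ^ (c-a-1-1)) ε := by
    have := h2'.comp ε hsub; rw [mul_one] at this; exact this
  have hmul := h1.mul h2
  have : HasDerivAt (f a c)
      ((a-1) * ε ^ (a-1-1) * (ε-1) ^ (c-a-1) + ε ^ (a-1) * ((c-a-1) * (ε-1) ^ (c-a-1-1))) ε := hmul
  convert this using 1
  unfold f
  have hne0 : ε ≠ 0 := ne_of_gt hε0
  have hne1 : ε - 1 ≠ 0 := ne_of_gt hε1
  have hP : ε ^ (a-1-1) = ε ^ (a-1) / ε := Real.rpow_sub_one hne0 (a-1)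
  have hQ : (ε-1) ^ (c-a-1-1) = (ε-1) ^ (c-a-1) / (ε-1) := Real.rpow_sub_one hne1 (c-a-1)
  rw [hP, hQ]
  generalize ε ^ (a-1) = P
  generalize (ε-1) ^ (c-a-1) = Q
  field_simp

theorem stmt_14 (a c ε : ℝ) (hε : 1 < ε) :
    Tendsto (fun α : ℝ =>
        f a c ε / ((1 / Real.sqrt (2 * ε * (ε - 1))) * (α - ε)) -
          f a c α / Real.sqrt (psi ε ε - psi ε α))
      (nhdsWithin ε (Set.Ioi ε))
      (nhds (-(f a c ε / (1 / Real.sqrt (2 * ε * (ε - 1)))) *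
        ((a - 1) / ε + (c - a - 1) / (ε - 1) + ε / (3 * (ε - 1)) - (ε - 1) / (3 * ε)))) ∧
    Tendsto (fun α : ℝ =>
        f a c ε / ((1 / Real.sqrt (2 * ε * (ε - 1))) * (α - ε)) +
          f a c α / Real.sqrt (psi ε ε - psi ε α))
      (nhdsWithin ε (Set.Iio ε))
      (nhds (-(f a c ε / (1 / Real.sqrt (2 * ε * (ε - 1)))) *
        ((a - 1) / ε + (c - a - 1) / (ε - 1) + ε / (3 * (ε - 1)) - (ε - 1) / (3 * ε)))) := by
  have hε0 : (0:ℝ) < ε := by linarith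
  have hε1 : (0:ℝ) < ε - 1 := by linarith
  set K := Real.sqrt (2 * ε * (ε - 1)) with hKdef
  have hKpos : 0 < K := Real.sqrt_pos.2 (by nlinarith)
  have hKne : K ≠ 0 := ne_of_gt hKpos
  have hK2 : K ^ 2 = 2 * ε * (ε - 1) := Real.sq_sqrt (by nlinarith)
  set q : ℝ := 1 / (2 * ε * (ε - 1)) with hqdef
  have hqpos : 0 < q := by rw [hqdef]; positivity
  have hκ : Real.sqrt q = 1 / K := by
    rw [hqdef, one_div, one_div, Real.sqrt_inv]
  -- filter map
  have hmap : Tendsto (fun α : ℝ => α - ε) (nhdsWithin ε {ε}ᶜ) (nhdsWithin 0 {(0:ℝ)}ᶜ) := by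
    rw [tendsto_nhdsWithin_iff]
    constructor
    · have h0 : Tendsto (fun α : ℝ => α - ε) (nhds ε) (nhds (ε - ε)) :=
        (continuous_id.sub continuous_const).tendsto ε
      rw [sub_self] at h0
      exact h0.mono_left nhdsWithin_le_nhds
    · filter_upwards [self_mem_nhdsWithin] with α hα
      simpa [sub_ne_zero] using hα
  have hmap0 : Tendsto (fun α : ℝ => α - ε) (nhdsWithin ε {ε}ᶜ) (nhds 0) :=
    hmap.mono_right nhdsWithin_le_nhds
  -- eventual facts
  have hIoo : Set.Ioo (1:ℝ) (ε+1) ∈ nhds ε := Ioo_mem_nhds hε (by linarith)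
  have hne_ev : ∀ᶠ α in nhdsWithin ε {ε}ᶜ, α - ε ≠ 0 := by
    filter_upwards [self_mem_nhdsWithin] with α hα
    simpa [sub_ne_zero] using hα
  -- Δ in log(1+x) form
  have hΔeq : ∀ᶠ α in nhdsWithin ε {ε}ᶜ, psi ε ε - psi ε α =
      ε * Real.log (1 + (α-ε)/ε) - (ε-1) * Real.log (1 + (α-ε)/(ε-1)) := by
    filter_upwards [nhdsWithin_le_nhds hIoo] with α hα
    have hα1 : 0 < α - 1 := by have := hα.1; linarith
    have hα0 : 0 < α := by have := hα.1; linarith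
    have e1 : 1 + (α-ε)/ε = α/ε := by field_simp; ring
    have e2 : 1 + (α-ε)/(ε-1) = (α-1)/(ε-1) := by field_simp; ring
    rw [e1, e2, Real.log_div (ne_of_gt hα0) (ne_of_gt hε0),
      Real.log_div (ne_of_gt hα1) (ne_of_gt hε1)]
    unfold psi
    ring
  -- third-order limit
  have hv : Tendsto (fun α : ℝ => (psi ε ε - psi ε α - q * (α-ε)^2) / (α-ε)^3)
      (nhdsWithin ε {ε}ᶜ) (nhds (1/(3*ε^2) - 1/(3*(ε-1)^2))) := by
    have hA := log_taylor3 ε hε0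
    have hB := log_taylor3 (ε-1) hε1
    have comp := (hA.sub hB).comp hmap
    apply comp.congr'
    filter_upwards [hΔeq, hne_ev] with α hΔ hh
    simp only [Function.comp_apply]
    rw [hΔ, div_sub_div_same]
    congr 1
    rw [hqdef]
    field_simp
    ring
  -- second-order limit
  have hu : Tendsto (fun α : ℝ => (psi ε ε - psi ε α) / (α-ε)^2)
      (nhdsWithin ε {ε}ᶜ) (nhds q) := by
    have htt := (tendsto_const_nhds (x := q)
      (f := nhdsWithin ε {ε}ᶜ)).add (hmap0.mul hv)
    rw [zero_mul, add_zero] at htt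
    apply htt.congr'
    filter_upwards [hne_ev] with α hh
    field_simp
    ring
  have hupos : ∀ᶠ α in nhdsWithin ε {ε}ᶜ, 0 < (psi ε ε - psi ε α) / (α-ε)^2 :=
    hu.eventually (eventually_gt_nhds hqpos)
  have hsu : Tendsto (fun α : ℝ => Real.sqrt ((psi ε ε - psi ε α) / (α-ε)^2))
      (nhdsWithin ε {ε}ᶜ) (nhds (1/K)) := by
    have := (Real.continuous_sqrt.tendsto q).comp hu
    rwa [hκ] at this
  -- slope of f
  have hslope : Tendsto (fun α : ℝ => (f a c α - f a c ε) / (α - ε))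
      (nhdsWithin ε {ε}ᶜ) (nhds (f a c ε * ((a-1)/ε + (c-a-1)/(ε-1)))) := by
    have := hasDerivAt_iff_tendsto_slope.1 (f_deriv a c ε hε)
    apply this.congr
    intro α
    rw [slope_def_field]
  -- slope of sqrt(u)
  have hsq_slope : Tendsto (fun α : ℝ =>
      (Real.sqrt ((psi ε ε - psi ε α) / (α-ε)^2) - 1/K) / (α - ε))
      (nhdsWithin ε {ε}ᶜ) (nhds ((1/(3*ε^2) - 1/(3*(ε-1)^2)) / (1/K + 1/K))) := by
    have hden : (1:ℝ)/K + 1/K ≠ 0 := by positivity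
    have base := hv.div (hsu.add (tendsto_const_nhds (x := 1/K))) hden
    apply base.congr'
    filter_upwards [hne_ev, hupos] with α hh hup
    simp only [Pi.div_apply]
    set s := Real.sqrt ((psi ε ε - psi ε α) / (α-ε)^2) with hsdef
    have hs2 : s ^ 2 = (psi ε ε - psi ε α) / (α-ε)^2 := Real.sq_sqrt hup.le
    have hκ2 : (1/K) ^ 2 = q := by
      rw [div_pow, one_pow, hK2, hqdef]
    have h2 : (psi ε ε - psi ε α) / (α-ε)^2 - q
        = (α - ε) * ((psi ε ε - psi ε α - q * (α-ε)^2) / (α-ε)^3) := by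
      field_simp
    have hspos : 0 < s + 1/K := by positivity
    rw [div_eq_div_iff (ne_of_gt hspos) hh]
    linear_combination -h2 - hs2 + hκ2
  -- the master limit
  have hMval : ((-(f a c ε * ((a-1)/ε + (c-a-1)/(ε-1)))
      + f a c ε * K * ((1/(3*ε^2) - 1/(3*(ε-1)^2)) / (1/K + 1/K))) / (1/K))
      = -(f a c ε / (1 / K)) *
        ((a - 1) / ε + (c - a - 1) / (ε - 1) + ε / (3 * (ε - 1)) - (ε - 1) / (3 * ε)) := by
    have hd : (1:ℝ)/K + 1/K = 2/K := by ring
    rw [hd]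
    have hKc : f a c ε * K * ((1/(3*ε^2) - 1/(3*(ε-1)^2)) / (2/K))
        = f a c ε * ((1/(3*ε^2) - 1/(3*(ε-1)^2)) * (ε*(ε-1))) := by
      rw [div_div_eq_mul_div]
      linear_combination (f a c ε * (1/(3*ε^2) - 1/(3*(ε-1)^2))/2) * hK2
    rw [hKc]
    rw [div_div_eq_mul_div, div_one, div_div_eq_mul_div, div_one]
    field_simp
    ring
  have hM : Tendsto (fun α : ℝ =>
      (f a c ε * K - f a c α / Real.sqrt ((psi ε ε - psi ε α) / (α-ε)^2)) / (α - ε))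
      (nhdsWithin ε {ε}ᶜ)
      (nhds (-(f a c ε / (1 / K)) *
        ((a - 1) / ε + (c - a - 1) / (ε - 1) + ε / (3 * (ε - 1)) - (ε - 1) / (3 * ε)))) := by
    rw [← hMval]
    have hN := ((hslope.neg.add
      ((tendsto_const_nhds (x := f a c ε * K)).mul hsq_slope)).div hsu
      (by positivity : (1:ℝ)/K ≠ 0))
    apply hN.congr'
    filter_upwards [hne_ev, hupos] with α hh hup
    simp only [Pi.div_apply]
    have hspos : 0 < Real.sqrt ((psi ε ε - psi ε α) / (α-ε)^2) := Real.sqrt_pos.2 hup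
    generalize hs : Real.sqrt ((psi ε ε - psi ε α) / (α-ε)^2) = s at hspos ⊢
    have hsne : s ≠ 0 := ne_of_gt hspos
    field_simp
    ring
  have hval_target := hM  -- alias
  constructor
  · -- right limit
    have hsub : nhdsWithin ε (Set.Ioi ε) ≤ nhdsWithin ε {ε}ᶜ :=
      nhdsWithin_mono ε (fun x hx => ne_of_gt hx)
    apply (hM.mono_left hsub).congr'
    have hIoi_ev : ∀ᶠ α in nhdsWithin ε (Set.Ioi ε), ε < α := self_mem_nhdsWithin
    filter_upwards [hIoi_ev] with α hα
    have hh : α - ε ≠ 0 := sub_ne_zero.2 (ne_of_gt hα)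
    have hhpos : 0 < α - ε := by linarith
    have key : (α-ε)^2 * ((psi ε ε - psi ε α) / (α-ε)^2) = psi ε ε - psi ε α := by
      field_simp
    set s := Real.sqrt ((psi ε ε - psi ε α) / (α-ε)^2) with hsdef
    have hsqrtΔ : Real.sqrt (psi ε ε - psi ε α) = (α - ε) * s := by
      rw [← key, Real.sqrt_mul (sq_nonneg _), Real.sqrt_sq hhpos.le, hsdef]
    have e1 : f a c ε / ((1/K) * (α - ε)) = f a c ε * K / (α - ε) := by
      rw [div_eq_div_iff (by simp [hKne, hh, sub_ne_zero] : (1/K) * (α - ε) ≠ 0) hh]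
      field_simp
    have e2 : f a c α / ((α - ε) * s) = (f a c α / s) / (α - ε) := by
      rw [div_div, mul_comm]
    rw [hsqrtΔ, e1, e2, ← sub_div]
  · -- left limit
    have hsub : nhdsWithin ε (Set.Iio ε) ≤ nhdsWithin ε {ε}ᶜ :=
      nhdsWithin_mono ε (fun x hx => ne_of_lt hx)
    apply (hM.mono_left hsub).congr'
    have hIio_ev : ∀ᶠ α in nhdsWithin ε (Set.Iio ε), α < ε := self_mem_nhdsWithin
    filter_upwards [hIio_ev] with α hα
    have hh : α - ε ≠ 0 := sub_ne_zero.2 (ne_of_lt hα)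
    have hhneg : α - ε < 0 := by linarith
    have key : (α-ε)^2 * ((psi ε ε - psi ε α) / (α-ε)^2) = psi ε ε - psi ε α := by
      field_simp
    set s := Real.sqrt ((psi ε ε - psi ε α) / (α-ε)^2) with hsdef
    have hsqrtΔ : Real.sqrt (psi ε ε - psi ε α) = -(α - ε) * s := by
      rw [← key, Real.sqrt_mul (sq_nonneg _), Real.sqrt_sq_eq_abs, abs_of_neg hhneg, hsdef]
    have e1 : f a c ε / ((1/K) * (α - ε)) = f a c ε * K / (α - ε) := by
      rw [div_eq_div_iff (by simp [hKne, hh, sub_ne_zero] : (1/K) * (α - ε) ≠ 0) hh]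
      field_simp
    have e2 : f a c α / (-(α - ε) * s) = -((f a c α / s) / (α - ε)) := by
      rw [neg_mul, div_neg, div_div, mul_comm]
    rw [hsqrtΔ, e1, e2, sub_div]
    ring
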